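/- Union step correctness: let X be a finite type, f : X → X with ≤f antisymmetric, and rx ry : X with f rx = rx, f ry = ry, and rx ≠ ry. Let g = Function.update f rx ry. Then ≤g is antisymmetric, and the equivalence relation ≡g equals the equivalence closure of ≡f ∪ {(rx,ry),(ry,rx)}; in particular n ≡g m ↔ (n ≡f m) ∨ (n ≡f rx ∧ m ≡f ry) ∨ (n ≡f ry ∧ m ≡f rx). -/
import Mathlib


def lef {X : Type*} (f : X → X) (n m : X) : Prop :=
  Relation.ReflTransGen (fun a b => b = f a) n m

def eqf {X : Type*} (f : X → X) (n m : X) : Prop :=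
  ∃ k, lef f n k ∧ lef f m k

lemma lef_fix {X : Type*} (f : X → X) {a m : X} (ha : f a = a) (h : lef f a m) : m = a := by
  induction h with
  | refl => rfl
  | tail _ h2 ih => subst ih; rw [h2, ha]

lemma lef_to_update {X : Type*} [DecidableEq X] (f : X → X) (rx ry : X) (hrx : f rx = rx)
    {n m : X} (h : lef f n m) : lef (Function.update f rx ry) n m := by
  induction h using Relation.ReflTransGen.head_induction_on with
  | refl => exact Relation.ReflTransGen.refl
  | @head a c h1 h2 ih =>
    by_cases hc : a = rx
    · rw [hc] at h1 ⊢
      have hcc : c = rx := by rw [h1, hrx]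
      rw [hcc] at ih; exact ih
    · exact Relation.ReflTransGen.head (by rw [Function.update_of_ne hc]; exact h1) ih

lemma lef_update_char {X : Type*} [DecidableEq X] (f : X → X) (rx ry : X) (hrx : f rx = rx)
    (hry : f ry = ry) (hne : rx ≠ ry) {n m : X} :
    lef (Function.update f rx ry) n m ↔ lef f n m ∨ (lef f n rx ∧ m = ry) := by
  constructor
  · intro h
    induction h using Relation.ReflTransGen.head_induction_on with
    | refl => exact Or.inl Relation.ReflTransGen.refl
    | @head a c h1 h2 ih =>
      by_cases hc : a = rx
      · rw [hc] at h1 ⊢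
        have hcy : c = ry := by rw [h1, Function.update_self]
        rcases ih with h' | ⟨h', hm⟩
        · rw [hcy] at h'
          exact Or.inr ⟨Relation.ReflTransGen.refl, lef_fix f hry h'⟩
        · exact Or.inr ⟨Relation.ReflTransGen.refl, hm⟩
      · have hc' : c = f a := by rw [h1, Function.update_of_ne hc]
        rcases ih with h' | ⟨h', hm⟩
        · exact Or.inl (Relation.ReflTransGen.head hc' h')
        · exact Or.inr ⟨Relation.ReflTransGen.head hc' h', hm⟩
  · rintro (h | ⟨h, hm⟩)
    · exact lef_to_update f rx ry hrx h
    · rw [hm]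
      exact (lef_to_update f rx ry hrx h).tail (by rw [Function.update_self])

theorem stmt_11 {X : Type*} [Fintype X] [DecidableEq X] (f : X → X)
    (antisym : ∀ n m : X, lef f n m → lef f m n → n = m)
    (rx ry : X) (hrx : f rx = rx) (hry : f ry = ry) (hne : rx ≠ ry) :
    (∀ n m : X, lef (Function.update f rx ry) n m →
        lef (Function.update f rx ry) m n → n = m) ∧
    (∀ n m : X, eqf (Function.update f rx ry) n m ↔
        (eqf f n m ∨ (eqf f n rx ∧ eqf f m ry) ∨ (eqf f n ry ∧ eqf f m rx))) := by
  have char := fun {n m : X} => lef_update_char f rx ry hrx hry hne (n := n) (m := m)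
  have refl : ∀ a : X, lef f a a := fun a => Relation.ReflTransGen.refl
  constructor
  · intro n m h1 h2
    rw [char] at h1 h2
    rcases h1 with h1 | ⟨h1, hm⟩
    · rcases h2 with h2 | ⟨h2, hn⟩
      · exact antisym n m h1 h2
      · rw [hn]; exact (lef_fix f hry (hn ▸ h1)).symm
    · rcases h2 with h2 | ⟨h2, hn⟩
      · rw [hm]; exact lef_fix f hry (hm ▸ h2)
      · rw [hm, hn]
  · intro n m
    constructor
    · rintro ⟨k, hn, hm⟩
      rw [char] at hn hm
      rcases hn with hn | ⟨hn, hk⟩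
      · rcases hm with hm | ⟨hm, hk⟩
        · exact Or.inl ⟨k, hn, hm⟩
        · rw [hk] at hn
          exact Or.inr (Or.inr ⟨⟨ry, hn, refl ry⟩, ⟨rx, hm, refl rx⟩⟩)
      · rcases hm with hm | ⟨hm, hk'⟩
        · rw [hk] at hm
          exact Or.inr (Or.inl ⟨⟨rx, hn, refl rx⟩, ⟨ry, hm, refl ry⟩⟩)
        · exact Or.inl ⟨rx, hn, hm⟩
    · have key : ∀ a r : X, f r = r → eqf f a r → lef f a r := by
        rintro a r hr ⟨k, h1, h2⟩
        have hk := lef_fix f hr h2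
        rw [← hk]; exact h1
      rintro (⟨k, hn, hm⟩ | ⟨hn, hm⟩ | ⟨hn, hm⟩)
      · exact ⟨k, lef_to_update f rx ry hrx hn, lef_to_update f rx ry hrx hm⟩
      · refine ⟨ry, ?_, lef_to_update f rx ry hrx (key m ry hry hm)⟩
        rw [char]; exact Or.inr ⟨key n rx hrx hn, rfl⟩
      · refine ⟨ry, lef_to_update f rx ry hrx (key n ry hry hn), ?_⟩
        rw [char]; exact Or.inr ⟨key m rx hrx hm, rfl⟩
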